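/- Let Λ be a ℤ-lattice with unimodular bilinear form L, monodromy M_h defined by L(M_h a, b) = -L(b, a), and let V ⊂ Λ ⊗ ℂ be a monodromy-invariant subspace not containing the eigenvalue 1. Then the hermitian form h := ⊕_λ h_λ (with h_λ(a,b) = √(-λ)·L(a, b̄)) is positive definite on V if and only if the hermitian form (a, b) ↦ L(a, b̄) + L(b̄, a) is positive definite on V. -/

import Mathlib

open Complex

lemma re_sqrt_pos {w : ℂ} (hw : w ≠ 0) (harg : w.arg ≠ Real.pi) :
    0 < (w ^ ((1:ℂ)/2)).re := by
  rw [cpow_def_of_ne_zero hw, Complex.exp_re]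
  apply mul_pos (Real.exp_pos _)
  have him : (Complex.log w * ((1:ℂ)/2)).im = w.arg / 2 := by
    simp [Complex.mul_im, Complex.log_im]
    ring
  rw [him]
  apply Real.cos_pos_of_mem_Ioo
  constructor
  · linarith [Complex.neg_pi_lt_arg w, Real.pi_pos]
  · have h1 := Complex.arg_le_pi w
    have h2 : w.arg < Real.pi := lt_of_le_of_ne h1 harg
    linarith

lemma key_c {lam : ℂ} (habs : ‖lam‖ = 1) (hne : lam ≠ 1) :
    ∃ c : ℝ, 0 < c ∧ (1 - lam) = (c : ℂ) * (-lam) ^ ((1:ℂ)/2) := by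
  have hlam0 : lam ≠ 0 := by intro h; simp [h] at habs
  have hconj' : (starRingEnd ℂ) lam * lam = 1 := by
    rw [mul_comm, Complex.mul_conj]
    norm_cast
    rw [Complex.normSq_eq_norm_sq, habs]; norm_num
  have hnl0 : (-lam) ≠ 0 := neg_ne_zero.mpr hlam0
  have hargne : (-lam).arg ≠ Real.pi := by
    intro h
    rw [Complex.arg_eq_pi_iff] at h
    have hre : lam.re > 0 := by have := h.1; simp at this; linarith
    have him : lam.im = 0 := by have := h.2; simpa using this
    apply hne
    have hl : lam = (lam.re : ℂ) := by apply Complex.ext <;> simp [him]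
    rw [hl] at habs ⊢
    rw [Complex.norm_real, Real.norm_eq_abs, abs_of_pos hre] at habs
    rw [habs]; norm_num
  set s := (-lam) ^ ((1:ℂ)/2) with hs
  have hs2 : s ^ 2 = -lam := by
    have h := Complex.cpow_nat_inv_pow (-lam) (n := 2) (by norm_num)
    rw [hs]; convert h using 3; norm_num
  have hsre : 0 < s.re := re_sqrt_pos hnl0 hargne
  have hs0 : s ≠ 0 := by
    intro h
    rw [h] at hs2
    simp only [ne_eq, zero_pow, OfNat.ofNat_ne_zero, not_false_eq_true] at hs2
    exact hnl0 hs2.symm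
  set t := (1 - lam) / s with ht
  have ht2 : t ^ 2 = ((2 - 2 * lam.re : ℝ) : ℂ) := by
    have h2re : (2 : ℂ) * lam.re = lam + (starRingEnd ℂ) lam := by
      rw [Complex.add_conj]; push_cast; ring
    rw [ht, div_pow, hs2, div_eq_iff hnl0]
    push_cast
    rw [h2re]
    linear_combination (-1 : ℂ) * hconj'
  have ht2pos : 0 < (2 - 2 * lam.re : ℝ) := by
    have hlt : lam.re < 1 := by
      rcases lt_or_eq_of_le (Complex.re_le_norm lam) with h | h
      · rw [habs] at h; exact h
      · exfalso
        apply hne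
        have him : lam.im = 0 := by
          have hsq := Complex.sq_norm lam
          rw [Complex.normSq_apply, habs] at hsq
          nlinarith [Complex.re_le_norm lam]
        apply Complex.ext <;> simp [h, habs, him]
    linarith
  have htim : t.im = 0 := by
    have h1 : (t ^ 2).im = 0 := by rw [ht2]; simp
    have h2 : 0 < (t ^ 2).re := by rw [ht2]; simpa using ht2pos
    rw [pow_two, Complex.mul_im] at h1
    rw [pow_two, Complex.mul_re] at h2
    have h3 : t.re * t.im = 0 := by linarith
    rcases mul_eq_zero.mp h3 with h | h
    · nlinarith [mul_self_nonneg t.im]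
    · exact h
  have heq : (1 : ℂ) - lam = t * s := by rw [ht]; field_simp
  have htre : t = ((t.re : ℝ) : ℂ) := by apply Complex.ext <;> simp [htim]
  have hre1 : 0 < ((1:ℂ) - lam).re := by simp; linarith [ht2pos]
  have hprod : ((1:ℂ) - lam).re = t.re * s.re := by
    rw [heq, Complex.mul_re, htim]; ring
  refine ⟨t.re, ?_, ?_⟩
  · nlinarith
  · rw [heq]; conv_lhs => rw [htre]

lemma abs_one_of_pow {z : ℂ} {n : ℕ} (hn : 0 < n) (h : z ^ n = 1) :
    ‖z‖ = 1 := by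
  have h1 : ‖z‖ ^ n = 1 := by rw [← norm_pow, h, norm_one]
  rcases lt_trichotomy ‖z‖ 1 with hlt | he | hgt
  · exfalso
    have := pow_lt_one₀ (norm_nonneg z) hlt hn.ne'
    rw [h1] at this; exact lt_irrefl _ this
  · exact he
  · exfalso
    have := one_lt_pow₀ hgt hn.ne'
    rw [h1] at this; exact lt_irrefl _ this

/-- For a monodromy-invariant subspace `W` not containing the eigenvalue 1,
the hermitian form `h = ⊕ h_lam` is positive definite on `W` if and only if the hermitian
form `(a, b) ↦ L(a, b̄) + L(b̄, a)` is positive definite on `W`. -/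
theorem stmt_2 (V : Type*) [AddCommGroup V] [Module ℂ V]
    (L : V →ₗ[ℂ] V →ₗ[ℂ] ℂ)
    (σ : V →+ V)
    (hσinv : ∀ v, σ (σ v) = v)
    (hσsmul : ∀ (c : ℂ) (v : V), σ (c • v) = (starRingEnd ℂ) c • σ v)
    (hLσ : ∀ a b : V, L (σ a) (σ b) = (starRingEnd ℂ) (L a b))
    (M : Module.End ℂ V)
    (hM : ∀ a b : V, L (M a) b = - L b a)
    (hMσ : ∀ v, M (σ v) = σ (M v))
    (n : ℕ) (hn : 0 < n) (hMn : M ^ n = 1)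
    (W : Submodule ℂ V)
    (hWM : ∀ v ∈ W, M v ∈ W)
    (hW1 : ∀ v ∈ W, M v = v → v = 0) :
    (∀ (lam : ℂ) (a : V), a ∈ W → M a = lam • a → a ≠ 0 →
        0 < ((-lam) ^ ((1 : ℂ) / 2) * L a (σ a)).re)
      ↔ ∀ a ∈ W, a ≠ 0 → 0 < (L a (σ a) + L (σ a) a).re := by
  -- M preserves L
  have hML : ∀ a b : V, L (M a) (M b) = L a b := by
    intro a b; rw [hM, hM]; ring
  -- pointwise equivalence on eigenvectors
  have keylam : ∀ (lam : ℂ) (a : V), a ∈ W → M a = lam • a → a ≠ 0 →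
      (0 < ((-lam) ^ ((1:ℂ)/2) * L a (σ a)).re ↔
        0 < (L a (σ a) + L (σ a) a).re) := by
    intro lam a haW hMa ha0
    have hpow : ∀ k : ℕ, (M ^ k) a = lam ^ k • a := by
      intro k; induction k with
      | zero => simp
      | succ k ih =>
        rw [pow_succ, Module.End.mul_apply, hMa, map_smul, ih, smul_smul, pow_succ,
          mul_comm]
    have hlamn : lam ^ n = 1 := by
      have h := hpow n
      rw [hMn] at h
      have h2 : (lam ^ n - 1) • a = 0 := by
        rw [sub_smul, one_smul, ← h]; simp
      rcases smul_eq_zero.mp h2 with h3 | h3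
      · exact sub_eq_zero.mp h3
      · exact absurd h3 ha0
    have habs : ‖lam‖ = 1 := abs_one_of_pow hn hlamn
    have hne1 : lam ≠ 1 := by
      intro h; exact ha0 (hW1 a haW (by rw [hMa, h, one_smul]))
    obtain ⟨c, hc, hceq⟩ := key_c habs hne1
    have hconjz : L (σ a) a = (starRingEnd ℂ) (L a (σ a)) := by
      have h := hLσ a (σ a); rw [hσinv] at h; exact h
    have hlz : lam * L a (σ a) = - L (σ a) a := by
      have h := hM a (σ a)
      rw [hMa, map_smul, LinearMap.smul_apply, smul_eq_mul] at h
      exact h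
    have hsum : L a (σ a) + L (σ a) a
        = (c : ℂ) * ((-lam) ^ ((1:ℂ)/2) * L a (σ a)) := by
      rw [← mul_assoc, ← hceq]
      linear_combination hlz
    rw [hsum, Complex.re_ofReal_mul]
    constructor
    · intro h; exact mul_pos hc h
    · intro h; nlinarith
  constructor
  · -- hard direction
    intro hpos a haW ha0
    set ζ : ℂ := Complex.exp (2 * Real.pi * Complex.I / n) with hζ
    have hprim : IsPrimitiveRoot ζ n := Complex.isPrimitiveRoot_exp n hn.ne'
    have hζn : ζ ^ n = 1 := hprim.pow_eq_one
    have hζ0 : ζ ≠ 0 := Complex.exp_ne_zero _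
    set ξ : ℂ := ζ⁻¹ with hξ
    have hξn : ξ ^ n = 1 := by rw [hξ, inv_pow, hζn, inv_one]
    have hζξ : ζ * ξ = 1 := mul_inv_cancel₀ hζ0
    set u : ℕ → V := fun k => (n:ℂ)⁻¹ • ∑ j ∈ Finset.range n, ξ^(j*k) • (M^j) a
      with hu
    obtain ⟨m, hm⟩ : ∃ m, n = m + 1 := ⟨n - 1, (Nat.succ_pred_eq_of_pos hn).symm⟩
    -- membership
    have hMW : ∀ (j : ℕ) (v : V), v ∈ W → (M^j) v ∈ W := by
      intro j
      induction j with
      | zero => intro v hv; simpa using hv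
      | succ j ih =>
        intro v hv
        rw [pow_succ, Module.End.mul_apply]
        exact ih _ (hWM v hv)
    have hC : ∀ k, u k ∈ W := by
      intro k
      apply Submodule.smul_mem
      apply Submodule.sum_mem
      intro j hj
      exact Submodule.smul_mem _ _ (hMW j a haW)
    -- sum of the u k is a
    have hA : ∑ k ∈ Finset.range n, u k = a := by
      rw [hu]
      simp only
      rw [← Finset.smul_sum, Finset.sum_comm]
      have hstep : ∀ j ∈ Finset.range n,
          ∑ k ∈ Finset.range n, ξ^(j*k) • (M^j) a
            = (if j = 0 then (n:ℂ) else 0) • (M^j) a := by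
        intro j hj
        rw [← Finset.sum_smul]
        congr 1
        have hrw : ∑ k ∈ Finset.range n, ξ^(j*k) = ∑ k ∈ Finset.range n, (ξ^j)^k := by
          apply Finset.sum_congr rfl
          intro k _
          rw [← pow_mul]
        rw [hrw]
        by_cases hj0 : j = 0
        · simp [hj0]
        · rw [if_neg hj0]
          have hne : ξ^j ≠ 1 := by
            intro h
            rw [hξ, inv_pow, inv_eq_one] at h
            obtain ⟨t, ht⟩ := (IsPrimitiveRoot.pow_eq_one_iff_dvd hprim j).mp h
            rw [Finset.mem_range] at hj
            cases t with
            | zero => exact hj0 (by simpa using ht)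
            | succ t =>
              have hle : n ≤ n * (t+1) := Nat.le_mul_of_pos_right n (Nat.succ_pos t)
              rw [ht] at hj
              exact absurd hj (not_lt.mpr hle)
          rw [geom_sum_eq hne]
          rw [← pow_mul, mul_comm j n, pow_mul, hξn, one_pow]
          simp
      rw [Finset.sum_congr rfl hstep]
      rw [Finset.sum_eq_single 0]
      · rw [if_pos rfl, pow_zero, Module.End.one_apply, smul_smul,
          inv_mul_cancel₀ (Nat.cast_ne_zero.mpr hn.ne' : (n:ℂ) ≠ 0), one_smul]
      · intro b _ hb; rw [if_neg hb, zero_smul]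
      · intro h; exfalso; apply h; rw [Finset.mem_range]; omega
    -- eigenvector property
    have hB : ∀ k, M (u k) = (ζ^k) • u k := by
      intro k
      rw [hu]
      simp only
      rw [map_smul, map_sum, smul_comm]
      congr 1
      rw [Finset.smul_sum]
      have hterm : ∀ j, M (ξ^(j*k) • (M^j) a) = ξ^(j*k) • (M^(j+1)) a := by
        intro j
        rw [map_smul, pow_succ', Module.End.mul_apply]
      rw [Finset.sum_congr rfl (fun j _ => hterm j)]
      rw [hm, Finset.sum_range_succ, Finset.sum_range_succ']
      congr 1
      · apply Finset.sum_congr rfl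
        intro j _
        rw [smul_smul]
        congr 1
        have h1 : (j+1)*k = j*k + k := by ring
        rw [h1, pow_add, ← mul_assoc, mul_comm (ζ^k), mul_assoc]
        have h2 : ζ^k * ξ^k = 1 := by rw [← mul_pow, hζξ, one_pow]
        rw [h2, mul_one]
      · rw [← hm, hMn]
        simp only [Nat.zero_mul, pow_zero, mul_one, Module.End.one_apply]
        have hξk0 : ξ^k ≠ 0 := pow_ne_zero _ (by rw [hξ]; exact inv_ne_zero hζ0)
        have h1 : ξ^(m*k) * ξ^k = 1 := by
          rw [← pow_add, show m*k + k = n*k by rw [hm]; ring, pow_mul, hξn, one_pow]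
        have h2 : ζ^k * ξ^k = 1 := by rw [← mul_pow, hζξ, one_pow]
        have h3 : ξ^(m*k) = ζ^k := mul_right_cancel₀ hξk0 (h1.trans h2.symm)
        rw [h3]
        simp
    -- each u k with M (u k) = u k is zero unless eigenvalue ≠ 1
    -- orthogonality
    have horth : ∀ (lx ly : ℂ) (x y : V), M x = lx • x → M y = ly • y →
        lx * (starRingEnd ℂ) ly ≠ 1 → L x (σ y) = 0 ∧ L (σ y) x = 0 := by
      intro lx ly x y hx hy hne
      have hσy : M (σ y) = (starRingEnd ℂ) ly • σ y := by
        rw [hMσ, hy, hσsmul]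
      constructor
      · have h := hML x (σ y)
        rw [hx, hσy] at h
        simp only [map_smul, LinearMap.smul_apply, smul_eq_mul] at h
        by_contra h0
        apply hne
        apply mul_right_cancel₀ h0
        rw [one_mul]
        linear_combination h
      · have h := hML (σ y) x
        rw [hx, hσy] at h
        simp only [map_smul, LinearMap.smul_apply, smul_eq_mul] at h
        by_contra h0
        apply hne
        apply mul_right_cancel₀ h0
        rw [one_mul]
        linear_combination h
    -- distinct eigenvalues among the u k
    have habsζk : ∀ k : ℕ, ‖ζ^k‖ = 1 := by
      intro k
      rw [norm_pow, abs_one_of_pow hn hζn, one_pow]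
    have hdiag : ∀ k ∈ Finset.range n, ∀ k' ∈ Finset.range n, k ≠ k' →
        (ζ^k) * (starRingEnd ℂ) (ζ^k') ≠ 1 := by
      intro k hk k' hk' hkk' h
      apply hkk'
      have hconj : (ζ^k') * (starRingEnd ℂ) (ζ^k') = 1 := by
        rw [Complex.mul_conj]
        norm_cast
        rw [Complex.normSq_eq_norm_sq, habsζk, one_pow]
      have hc0 : (starRingEnd ℂ) (ζ^k') ≠ 0 := by
        intro h0
        rw [h0, mul_zero] at hconj
        exact zero_ne_one hconj
      have : (ζ:ℂ)^k = ζ^k' := mul_right_cancel₀ hc0 (h.trans hconj.symm)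
      rw [Finset.mem_range] at hk hk'
      exact hprim.pow_inj hk hk' this
    -- expand the quadratic form
    have h1 : L a (σ a) = ∑ k ∈ Finset.range n, ∑ k' ∈ Finset.range n,
        L (u k) (σ (u k')) := by
      have hc := congrArg (fun w => L w (σ a)) hA
      rw [← hc, map_sum L u (Finset.range n), LinearMap.sum_apply]
      apply Finset.sum_congr rfl
      intro k _
      rw [← map_sum (L (u k)) (fun k' => σ (u k')) (Finset.range n),
          ← map_sum σ u (Finset.range n), hA]
    have h2 : L (σ a) a = ∑ k ∈ Finset.range n, ∑ k' ∈ Finset.range n,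
        L (σ (u k')) (u k) := by
      have hc := congrArg (fun w => L (σ w) a) hA
      have hout2 : L (σ a) a = ∑ k' ∈ Finset.range n, L (σ (u k')) a := by
        rw [← hc, map_sum σ u (Finset.range n), map_sum L _ (Finset.range n),
          LinearMap.sum_apply]
      have hinner : ∀ k', L (σ (u k')) a
          = ∑ k ∈ Finset.range n, L (σ (u k')) (u k) := by
        intro k'
        rw [← map_sum (L (σ (u k'))) u (Finset.range n), hA]
      rw [hout2, Finset.sum_congr rfl (fun k' _ => hinner k'), Finset.sum_comm]
    have hexp : L a (σ a) + L (σ a) a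
        = ∑ k ∈ Finset.range n, (L (u k) (σ (u k)) + L (σ (u k)) (u k)) := by
      rw [h1, h2, ← Finset.sum_add_distrib]
      apply Finset.sum_congr rfl
      intro k hk
      rw [← Finset.sum_add_distrib]
      rw [Finset.sum_eq_single k]
      · intro k' hk' hne
        obtain ⟨o1, o2⟩ := horth (ζ^k) (ζ^k') (u k) (u k') (hB k) (hB k')
          (hdiag k hk k' hk' (Ne.symm hne))
        rw [o1, o2, add_zero]
      · intro h
        exact absurd hk h
    -- conclude positivity
    rw [hexp, Complex.re_sum]
    have hnonneg : ∀ k ∈ Finset.range n,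
        0 ≤ (L (u k) (σ (u k)) + L (σ (u k)) (u k)).re := by
      intro k _
      by_cases hk0 : u k = 0
      · simp [hk0]
      · exact le_of_lt ((keylam (ζ^k) (u k) (hC k) (hB k) hk0).mp
          (hpos (ζ^k) (u k) (hC k) (hB k) hk0))
    have hex : ∃ k ∈ Finset.range n, u k ≠ 0 := by
      by_contra hno
      push_neg at hno
      apply ha0
      rw [← hA]
      exact Finset.sum_eq_zero hno
    obtain ⟨k, hk, hk0⟩ := hex
    refine Finset.sum_pos' hnonneg ⟨k, hk, ?_⟩
    exact ((keylam (ζ^k) (u k) (hC k) (hB k) hk0).mp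
      (hpos (ζ^k) (u k) (hC k) (hB k) hk0))
  · intro hq lam a haW hMa ha0
    exact (keylam lam a haW hMa ha0).mpr (hq a haW ha0)
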